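/- If X is a finite, nonempty type and f : X → X ⊕ Unit is any function, then there exists an element of X ⊕ Unit that is not in the range of f. (Strong dual pigeonhole principle for X + 1, conjectured by Bénabou and Loiseau.) -/

import Mathlib

/-- Strong dual pigeonhole principle for `X + 1`: if `X` is finite and nonempty, then
no `f : X → X ⊕ Unit` is surjective; in fact some element is outside the range of `f`. -/
theorem strong_dual_pigeonhole_sum {X : Type*} [Finite X] [Nonempty X]
    (f : X → X ⊕ Unit) : ∃ y : X ⊕ Unit, y ∉ Set.range f := by
  have h : ¬ Function.Surjective f := by
    intro hs
    have := Nat.card_le_card_of_surjective f hs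
    simp [Nat.card_sum] at this
  rw [← Set.range_eq_univ] at h
  exact Set.nonempty_compl.mpr h |>.imp fun y hy => hy
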